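/- For every ε > 0 and every λ > 0, the function r ↦ Δ_ε(r,λ) is strictly concave on (0,1]; in particular its second derivative in r is strictly negative for all r ∈ (0,1). -/

import Mathlib

open Real

/-- `Δ_ε(r, λ) = (log(1+λ) + ε)/log(1 + λ/r) - r`. -/
noncomputable def DeltaEps (ε r lam : ℝ) : ℝ :=
  (Real.log (1 + lam) + ε) / Real.log (1 + lam / r) - r

lemma key_log_ineq {t : ℝ} (ht : 0 < t) : 2 * t / (t + 2) < Real.log (1 + t) := by
  have hmono : StrictMonoOn (fun t : ℝ => Real.log (1 + t) - (2 - 4 / (t + 2))) (Set.Ici 0) := by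
    apply strictMonoOn_of_deriv_pos (convex_Ici 0)
    · apply ContinuousOn.sub
      · apply ContinuousOn.log (by fun_prop)
        intro x hx
        simp only [Set.mem_Ici] at hx
        positivity
      · apply ContinuousOn.sub continuousOn_const
        apply ContinuousOn.div continuousOn_const (by fun_prop)
        intro x hx
        simp only [Set.mem_Ici] at hx
        positivity
    · intro x hx
      rw [interior_Ici] at hx
      have hx0 : (0:ℝ) < x := hx
      have h1 : HasDerivAt (fun t : ℝ => Real.log (1 + t)) (1 / (1 + x)) x := by
        have := ((hasDerivAt_id x).const_add 1).log (by positivity)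
        simpa using this
      have h2 : HasDerivAt (fun t : ℝ => 2 - 4 / (t + 2)) (4 / (x + 2) ^ 2) x := by
        have hne : x + 2 ≠ 0 := by positivity
        have base := (((hasDerivAt_id x).add_const 2).inv hne).const_mul 4
        have h3 : HasDerivAt (fun t : ℝ => 2 - 4 / (t + 2)) (-(4 * (-1 / (x + 2) ^ 2))) x := by
          simpa [div_eq_mul_inv] using base.const_sub 2
        convert h3 using 1
        ring
      have h : deriv (fun t : ℝ => Real.log (1 + t) - (2 - 4 / (t + 2))) x = _ := (h1.sub h2).deriv
      rw [h]
      have : 0 < 1 / (1 + x) - 4 / (x + 2) ^ 2 := by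
        rw [sub_pos, div_lt_div_iff₀ (by positivity) (by positivity)]
        nlinarith
      exact this
  have := hmono (Set.self_mem_Ici) (Set.mem_Ici.mpr ht.le) ht
  simp only [Set.mem_Ici] at this
  have h0 : Real.log (1 + (0:ℝ)) - (2 - 4 / ((0:ℝ) + 2)) = 0 := by norm_num
  have h2 : 2 - 4 / (t + 2) = 2 * t / (t + 2) := by field_simp; ring
  simp only [h0] at this
  nlinarith [this]

lemma gfun_pos {lam r : ℝ} (hlam : 0 < lam) (hr : 0 < r) : 0 < Real.log (1 + lam / r) :=
  Real.log_pos (by have := div_pos hlam hr; linarith)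

lemma hasDerivAt_gfun {lam r : ℝ} (hlam : 0 < lam) (hr : 0 < r) :
    HasDerivAt (fun r => Real.log (1 + lam / r)) (-lam / (r * (r + lam))) r := by
  have h0 : (0:ℝ) < 1 + lam / r := by positivity
  have h1 : HasDerivAt (fun r : ℝ => 1 + lam / r) (lam * -(r ^ 2)⁻¹) r := by
    simpa [div_eq_mul_inv] using ((hasDerivAt_inv hr.ne').const_mul lam).const_add 1
  have h2 := h1.log h0.ne'
  convert h2 using 1
  field_simp

lemma hasDerivAt_Delta {ε lam r : ℝ} (hlam : 0 < lam) (hr : 0 < r) :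
    HasDerivAt (fun r => DeltaEps ε r lam)
      ((Real.log (1 + lam) + ε) * lam / (r * (r + lam) * Real.log (1 + lam / r) ^ 2) - 1) r := by
  have hg := hasDerivAt_gfun hlam hr
  have hgpos := gfun_pos hlam hr
  have h1 := ((hg.inv hgpos.ne').const_mul (Real.log (1 + lam) + ε)).sub (hasDerivAt_id r)
  have heq : (fun r => (Real.log (1 + lam) + ε) * (Real.log (1 + lam / r))⁻¹ - id r)
      = fun r => DeltaEps ε r lam := by
    ext x; simp [DeltaEps, div_eq_mul_inv]
  replace h1 : HasDerivAt (fun r => (Real.log (1 + lam) + ε) * (Real.log (1 + lam / r))⁻¹ - id r) _ r := h1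
  rw [heq] at h1
  convert h1 using 1
  have hrne : r * (r + lam) ≠ 0 := by positivity
  field_simp

/-- For every `ε > 0` and `λ > 0`, `r ↦ Δ_ε(r,λ)` is strictly concave on `(0,1]`;
in particular its second derivative is strictly negative on `(0,1)`. -/
theorem DeltaEps_strictConcave (ε : ℝ) (hε : 0 < ε) (lam : ℝ) (hlam : 0 < lam) :
    StrictConcaveOn ℝ (Set.Ioc (0 : ℝ) 1) (fun r => DeltaEps ε r lam) ∧
    ∀ r ∈ Set.Ioo (0 : ℝ) 1,
      deriv (deriv (fun r => DeltaEps ε r lam)) r < 0 := by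
  set C := Real.log (1 + lam) + ε with hCdef
  have hC : 0 < C := add_pos_of_nonneg_of_pos (Real.log_nonneg (by linarith)) hε
  -- second derivative negative on all of Ioi 0
  have hsecond : ∀ r : ℝ, 0 < r → deriv (deriv (fun r => DeltaEps ε r lam)) r < 0 := by
    intro r hr
    set g : ℝ → ℝ := fun r => Real.log (1 + lam / r) with hgdef
    have hgpos : 0 < g r := gfun_pos hlam hr
    -- deriv f = F' on Ioi 0
    set F' : ℝ → ℝ := fun r => C * lam / (r * (r + lam) * g r ^ 2) - 1 with hF'def
    have hev : deriv (fun r => DeltaEps ε r lam) =ᶠ[nhds r] F' := by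
      filter_upwards [Ioi_mem_nhds hr] with x hx
      exact (hasDerivAt_Delta hlam hx).deriv
    rw [hev.deriv_eq]
    -- derivative of h r = r*(r+lam)*(g r)^2
    have hg := hasDerivAt_gfun hlam hr
    have hh : HasDerivAt (fun r => r * (r + lam) * g r ^ 2)
        ((1 * (r + lam) + r * 1) * g r ^ 2
          + r * (r + lam) * ((2 : ℕ) * g r ^ 1 * (-lam / (r * (r + lam))))) r :=
      ((hasDerivAt_id r).mul ((hasDerivAt_id r).add_const lam)).mul (hg.pow 2)
    set h' : ℝ := (1 * (r + lam) + r * 1) * g r ^ 2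
          + r * (r + lam) * ((2 : ℕ) * g r ^ 1 * (-lam / (r * (r + lam)))) with hh'def
    have hhne : r * (r + lam) * g r ^ 2 ≠ 0 := by positivity
    have hF' : HasDerivAt F'
        (C * lam * (-h' / (r * (r + lam) * g r ^ 2) ^ 2)) r := by
      have := ((hh.inv hhne).const_mul (C * lam)).sub_const 1
      exact this.congr_of_eventuallyEq (Filter.Eventually.of_forall fun x => by simp only [hF'def, Pi.inv_apply, div_eq_mul_inv])
    rw [hF'.deriv]
    -- positivity of h'
    have hkey : 2 * lam < (2 * r + lam) * g r := by
      have hlog := key_log_ineq (div_pos hlam hr)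
      have heq : 2 * (lam / r) / (lam / r + 2) = 2 * lam / (lam + 2 * r) := by
        rw [div_eq_div_iff (by positivity) (by positivity)]
        field_simp
      rw [heq] at hlog
      have := (div_lt_iff₀ (by positivity : (0:ℝ) < lam + 2 * r)).mp hlog
      nlinarith
    have hh'pos : 0 < h' := by
      have hrl : r * (r + lam) ≠ 0 := by positivity
      have heq : h' = g r * ((2 * r + lam) * g r - 2 * lam) := by
        rw [hh'def]
        field_simp
        ring
      rw [heq]
      exact mul_pos hgpos (by linarith)
    have hpos : 0 < h' / (r * (r + lam) * g r ^ 2) ^ 2 := by positivity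
    have hCl : 0 < C * lam := mul_pos hC hlam
    have hneg : -h' / (r * (r + lam) * g r ^ 2) ^ 2 < 0 := by
      rw [neg_div]; linarith
    exact mul_neg_of_pos_of_neg hCl hneg
  constructor
  · apply strictConcaveOn_of_deriv2_neg (convex_Ioc 0 1)
    · intro x hx
      exact (hasDerivAt_Delta hlam hx.1).continuousAt.continuousWithinAt
    · intro x hx
      rw [interior_Ioc] at hx
      simpa [Function.iterate_succ, Function.comp] using hsecond x hx.1
  · intro r hr
    exact hsecond r hr.1
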